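/- Let X be a Banach space and (A(n))_{n∈Z+} a sequence of bounded linear operators on X with cocycle Φ. Suppose that: (a) for every bounded sequence (y(n))_{n∈Z+} in X there exists a bounded sequence (x(n))_{n∈Z+} in X with x(n+1) = A(n)x(n) + y(n) for all n ∈ Z+; and (b) the subspace S := {v ∈ X : sup_{n∈Z+} ‖Φ(n,0)v‖ < +∞} (not assumed closed) admits a closed subspace Z of X with X = S ⊕ Z. Then the system x(n+1) = A(n)x(n) admits an exponential dichotomy on Z+ (and in particular S is closed). -/

import Mathlib

open Real ContinuousLinearMap

noncomputable section

universe u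

variable {X : Type u} [NormedAddCommGroup X] [NormedSpace ℝ X]

/-- The cocycle associated with the system `x(n+1) = A(n) x(n)`, as a function of the
number of steps: `cocycleAux A n k = A(n+k-1) ∘ ⋯ ∘ A(n)`. -/
def cocycleAux (A : ℤ → X →L[ℝ] X) (n : ℤ) : ℕ → (X →L[ℝ] X)
  | 0 => ContinuousLinearMap.id ℝ X
  | k + 1 => (A (n + k)).comp (cocycleAux A n k)

/-- The cocycle `Φ(m, n) = A(m-1) ⋯ A(n)` for `m > n`, and `Φ(n, n) = Id`. -/
def Phi (A : ℤ → X →L[ℝ] X) (m n : ℤ) : X →L[ℝ] X :=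
  cocycleAux A n (m - n).toNat

/-- The system `x(n+1) = A(n) x(n)`, `n ∈ J'`, admits an exponential dichotomy on `J`
with respect to the family of (bounded) projections `P(n)`, `n ∈ J`:
there are constants `K, α > 0` such that
(i) `P(n)` are projections, `A(n) P(n) = P(n+1) A(n)` for `n ∈ J'`, and `A(n)` maps
`ker P(n)` bijectively onto `ker P(n+1)` for `n ∈ J'`;
(ii) `‖Φ(m,n) P(n)‖ ≤ K e^{-α (m-n)}` for `m ≥ n` in `J`;
(iii) `‖Φ(m,n) (Id - P(n))‖ ≤ K e^{-α (n-m)}` for `m ≤ n` in `J`, where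
`Φ(m,n) : ker P(n) → ker P(m)` denotes the inverse of `Φ(n,m)` restricted to `ker P(m)`;
the latter is phrased as: whenever `x ∈ ker P(m)` and `Φ(n,m) x = (Id - P(n)) y`,
then `‖x‖ ≤ K e^{-α (n-m)} ‖y‖`. -/
def IsExpDichotomy (J J' : Set ℤ) (A P : ℤ → X →L[ℝ] X) : Prop :=
  ∃ K α : ℝ, 0 < K ∧ 0 < α ∧
    (∀ n ∈ J, (P n).comp (P n) = P n) ∧
    (∀ n ∈ J', (A n).comp (P n) = (P (n + 1)).comp (A n)) ∧
    (∀ n ∈ J', Set.BijOn (A n) {x : X | P n x = 0} {x : X | P (n + 1) x = 0}) ∧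
    (∀ m n : ℤ, m ∈ J → n ∈ J → n ≤ m →
      ‖(Phi A m n).comp (P n)‖ ≤ K * Real.exp (-α * ((m : ℝ) - (n : ℝ)))) ∧
    (∀ m n : ℤ, m ∈ J → n ∈ J → m ≤ n → ∀ x y : X,
      P m x = 0 → Phi A n m x = y - P n y →
      ‖x‖ ≤ K * Real.exp (-α * ((n : ℝ) - (m : ℝ))) * ‖y‖)

/-- The system `x(n+1) = A(n) x(n)`, `n ∈ J'`, admits an exponential dichotomy on `J`. -/
def ExpDichotomy (J J' : Set ℤ) (A : ℤ → X →L[ℝ] X) : Prop :=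
  ∃ P : ℤ → X →L[ℝ] X, IsExpDichotomy J J' A P

/-- A subspace (given as a set) `S` of `X` is complemented: there is a closed subspace `Z`
of `X` with `X = S ⊕ Z`. -/
def IsComplementedSubspace (S : Set X) : Prop :=
  ∃ Z : Submodule ℝ X, IsClosed (Z : Set X) ∧
    (∀ v ∈ S, v ∈ Z → v = (0 : X)) ∧ ∀ v : X, ∃ s ∈ S, ∃ z ∈ Z, v = s + z

/-- The subspace `S = {v : sup_{n ∈ ℤ⁺} ‖Φ(n,0) v‖ < ∞}` of initial conditions of bounded
forward solutions. -/
def Sset (A : ℤ → X →L[ℝ] X) : Set X :=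
  {v : X | ∃ C : ℝ, ∀ n : ℤ, 0 ≤ n → ‖Phi A n 0 v‖ ≤ C}

/-- The subspace `U(m)` of all `v` for which there is a bounded sequence `(x(n))_{n ≤ m}`
with `x(m) = v` and `x(n) = A(n-1) x(n-1)` for `n ≤ m`. -/
def Uset (A : ℤ → X →L[ℝ] X) (m : ℤ) : Set X :=
  {v : X | ∃ x : ℤ → X, x m = v ∧ (∃ C : ℝ, ∀ n : ℤ, n ≤ m → ‖x n‖ ≤ C) ∧
    ∀ n : ℤ, n ≤ m → x n = A (n - 1) (x (n - 1))}

variable {X1 : Type u} {X2 : Type u} [NormedAddCommGroup X1] [NormedSpace ℝ X1]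
  [NormedAddCommGroup X2] [NormedSpace ℝ X2]

/-- The triangular system operator `(x1, x2) ↦ (A11(n) x1 + A12(n) x2, A22(n) x2)`. -/
def triangular (A11 : ℤ → X1 →L[ℝ] X1) (A12 : ℤ → X2 →L[ℝ] X1)
    (A22 : ℤ → X2 →L[ℝ] X2) (n : ℤ) : (X1 × X2) →L[ℝ] X1 × X2 :=
  (((A11 n).comp (fst ℝ X1 X2)) + ((A12 n).comp (snd ℝ X1 X2))).prod
    ((A22 n).comp (snd ℝ X1 X2))

/-- The diagonal system operator `(x1, x2) ↦ (A11(n) x1, A22(n) x2)`. -/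
def diagonal (A11 : ℤ → X1 →L[ℝ] X1) (A22 : ℤ → X2 →L[ℝ] X2) (n : ℤ) :
    (X1 × X2) →L[ℝ] X1 × X2 :=
  (A11 n).prodMap (A22 n)

namespace DichoAux

variable {X : Type u} [NormedAddCommGroup X] [NormedSpace ℝ X]

/-- The cocycle with natural-number indices: `PsiN A n m = Φ(m, n)` for `n ≤ m`. -/
def PsiN (A : ℤ → X →L[ℝ] X) (n m : ℕ) : X →L[ℝ] X := cocycleAux A n (m - n)

lemma phi_eq_psiN (A : ℤ → X →L[ℝ] X) (n m : ℕ) :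
    Phi A (m : ℤ) (n : ℤ) = PsiN A n m := by
  unfold Phi PsiN
  congr 1
  omega

lemma phi_eq_psiN' (A : ℤ → X →L[ℝ] X) {n m : ℤ} (hn : 0 ≤ n) (hm : 0 ≤ m) :
    Phi A m n = PsiN A n.toNat m.toNat := by
  conv_lhs => rw [← Int.toNat_of_nonneg hn, ← Int.toNat_of_nonneg hm]
  rw [phi_eq_psiN]

lemma psiN_self (A : ℤ → X →L[ℝ] X) (n : ℕ) : PsiN A n n = ContinuousLinearMap.id ℝ X := by
  unfold PsiN
  simp only [Nat.sub_self]
  rfl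

lemma psiN_self_apply (A : ℤ → X →L[ℝ] X) (n : ℕ) (v : X) : PsiN A n n v = v := by
  rw [psiN_self]; rfl

lemma psiN_le (A : ℤ → X →L[ℝ] X) {n m : ℕ} (h : m ≤ n) :
    PsiN A n m = ContinuousLinearMap.id ℝ X := by
  unfold PsiN
  rw [Nat.sub_eq_zero_of_le h]
  rfl

lemma psiN_succ (A : ℤ → X →L[ℝ] X) {n m : ℕ} (h : n ≤ m) :
    PsiN A n (m + 1) = (A m).comp (PsiN A n m) := by
  unfold PsiN
  have h1 : m + 1 - n = (m - n) + 1 := by omega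
  rw [h1]
  show (A ((n : ℤ) + ((m - n : ℕ) : ℤ))).comp _ = _
  congr 2
  omega

lemma psiN_succ_apply (A : ℤ → X →L[ℝ] X) {n m : ℕ} (h : n ≤ m) (v : X) :
    PsiN A n (m + 1) v = A m (PsiN A n m v) := by
  rw [psiN_succ A h]; rfl

/-- A trajectory of the homogeneous system equals the cocycle applied to the initial value. -/
lemma traj_eq_psiN (A : ℤ → X →L[ℝ] X) (x : ℕ → X) (n : ℕ)
    (hx : ∀ i, n ≤ i → x (i + 1) = A i (x i)) :
    ∀ m, n ≤ m → x m = PsiN A n m (x n) := by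
  intro m hm
  induction m with
  | zero => rw [Nat.le_zero] at hm; subst hm; rw [psiN_self_apply]
  | succ k ih =>
    rcases Nat.lt_or_ge n (k+1) with h | h
    · have hk : n ≤ k := by omega
      rw [hx k hk, ih hk, psiN_succ_apply A hk]
    · have : n = k + 1 := by omega
      subst this; rw [psiN_self_apply]

lemma psiN_comp_apply (A : ℤ → X →L[ℝ] X) {n k m : ℕ} (h1 : n ≤ k) (h2 : k ≤ m) (v : X) :
    PsiN A k m (PsiN A n k v) = PsiN A n m v := by
  have := traj_eq_psiN A (fun i => PsiN A n i v) k (fun i hi => by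
    exact psiN_succ_apply A (le_trans h1 hi) v) m h2
  simpa using this.symm

end DichoAux
namespace DichoAux

variable {X : Type u} [NormedAddCommGroup X] [NormedSpace ℝ X]

lemma phi_zero_eq_psiN (A : ℤ → X →L[ℝ] X) (m : ℕ) : Phi A (m : ℤ) 0 = PsiN A 0 m := by
  have := phi_eq_psiN A 0 m
  simpa using this

lemma sset_mem_iff (A : ℤ → X →L[ℝ] X) (v : X) :
    v ∈ Sset A ↔ ∃ C : ℝ, ∀ m : ℕ, ‖PsiN A 0 m v‖ ≤ C := by
  constructor
  · rintro ⟨C, hC⟩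
    exact ⟨C, fun m => by
      have := hC (m : ℤ) (by positivity)
      rwa [phi_zero_eq_psiN A m] at this⟩
  · rintro ⟨C, hC⟩
    refine ⟨C, fun n hn => ?_⟩
    have h0 : Phi A n 0 = PsiN A 0 n.toNat := by
      have := phi_eq_psiN' A (le_refl (0:ℤ)) hn
      simpa using this
    rw [h0]; exact hC n.toNat

lemma exist_sol (A : ℤ → X →L[ℝ] X)
    (hadm : ∀ y : ℤ → X, (∃ C : ℝ, ∀ n : ℤ, 0 ≤ n → ‖y n‖ ≤ C) →
      ∃ x : ℤ → X, (∃ C : ℝ, ∀ n : ℤ, 0 ≤ n → ‖x n‖ ≤ C) ∧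
        ∀ n : ℤ, 0 ≤ n → x (n + 1) = A n (x n) + y n)
    (Z : Submodule ℝ X)
    (hZspan : ∀ v : X, ∃ s ∈ Sset A, ∃ z ∈ Z, v = s + z)
    (y : ℕ → X) (Cy : ℝ) (hy : ∀ n, ‖y n‖ ≤ Cy) :
    ∃ x : ℕ → X, x 0 ∈ Z ∧ (∃ Cx : ℝ, ∀ n, ‖x n‖ ≤ Cx) ∧
      ∀ n : ℕ, x (n + 1) = A n (x n) + y n := by
  obtain ⟨xZ, ⟨CZ, hCZ⟩, hrec⟩ := hadm (fun i => y i.toNat) ⟨Cy, fun n _ => hy n.toNat⟩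
  obtain ⟨s, hs, z, hz, hdec⟩ := hZspan (xZ 0)
  obtain ⟨Cs, hCs⟩ := (sset_mem_iff A s).1 hs
  refine ⟨fun k => xZ (k : ℤ) - PsiN A 0 k s, ?_, ⟨CZ + Cs, fun k => ?_⟩, fun k => ?_⟩
  · show xZ ((0:ℕ) : ℤ) - PsiN A 0 0 s ∈ Z
    have : xZ ((0:ℕ) : ℤ) - PsiN A 0 0 s = z := by
      rw [psiN_self_apply]
      simp only [Nat.cast_zero]
      rw [hdec]; abel
    rw [this]; exact hz
  · show ‖xZ ((k:ℕ) : ℤ) - PsiN A 0 k s‖ ≤ CZ + Cs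
    calc ‖xZ (k:ℤ) - PsiN A 0 k s‖ ≤ ‖xZ (k:ℤ)‖ + ‖PsiN A 0 k s‖ := norm_sub_le _ _
    _ ≤ CZ + Cs := add_le_add (hCZ _ (by positivity)) (hCs k)
  · show xZ ((k+1 : ℕ) : ℤ) - PsiN A 0 (k+1) s
        = A (k : ℤ) (xZ (k:ℤ) - PsiN A 0 k s) + y k
    have h1 : ((k + 1 : ℕ) : ℤ) = (k : ℤ) + 1 := by push_cast; ring
    have h2 := hrec (k : ℤ) (by positivity)
    have h3 : (((k:ℤ)).toNat) = k := by simp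
    rw [h1, h2, h3, psiN_succ_apply A (Nat.zero_le k), map_sub]
    abel

lemma uniq_sol (A : ℤ → X →L[ℝ] X) (Z : Submodule ℝ X)
    (hZdisj : ∀ v ∈ Sset A, v ∈ Z → v = (0:X))
    (y x x' : ℕ → X) (hx0 : x 0 ∈ Z) (hx0' : x' 0 ∈ Z)
    (hrec : ∀ n : ℕ, x (n + 1) = A n (x n) + y n)
    (hrec' : ∀ n : ℕ, x' (n + 1) = A n (x' n) + y n)
    (hb : ∃ C : ℝ, ∀ n, ‖x n‖ ≤ C) (hb' : ∃ C : ℝ, ∀ n, ‖x' n‖ ≤ C) : x = x' := by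
  obtain ⟨C, hC⟩ := hb
  obtain ⟨C', hC'⟩ := hb'
  have hd : ∀ m : ℕ, x m - x' m = PsiN A 0 m (x 0 - x' 0) := by
    intro m
    refine traj_eq_psiN A (fun k => x k - x' k) 0 (fun i _ => ?_) m (Nat.zero_le m)
    show x (i+1) - x' (i+1) = A (i:ℤ) (x i - x' i)
    simp only [hrec i, hrec' i, map_sub]
    abel
  have h0S : x 0 - x' 0 ∈ Sset A := by
    rw [sset_mem_iff]
    exact ⟨C + C', fun m => by
      rw [← hd m]
      exact le_trans (norm_sub_le _ _) (add_le_add (hC m) (hC' m))⟩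
  have h00 : x 0 - x' 0 = 0 := hZdisj _ h0S (sub_mem hx0 hx0')
  funext m
  have := hd m
  rw [h00, map_zero] at this
  exact sub_eq_zero.1 this

end DichoAux
namespace DichoAux

open BoundedContinuousFunction

variable {X : Type u} [NormedAddCommGroup X] [NormedSpace ℝ X]

lemma key (A : ℤ → X →L[ℝ] X) [CompleteSpace X]
    (hadm : ∀ y : ℤ → X, (∃ C : ℝ, ∀ n : ℤ, 0 ≤ n → ‖y n‖ ≤ C) →
      ∃ x : ℤ → X, (∃ C : ℝ, ∀ n : ℤ, 0 ≤ n → ‖x n‖ ≤ C) ∧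
        ∀ n : ℤ, 0 ≤ n → x (n + 1) = A n (x n) + y n)
    (Z : Submodule ℝ X) (hZc : IsClosed (Z : Set X))
    (hZspan : ∀ v : X, ∃ s ∈ Sset A, ∃ z ∈ Z, v = s + z)
    (hZdisj : ∀ v ∈ Sset A, v ∈ Z → v = (0:X)) :
    ∃ c : ℝ, 1 ≤ c ∧ ∀ (y x : ℕ → X) (Cy : ℝ), (∀ n, ‖y n‖ ≤ Cy) → x 0 ∈ Z →
      (∀ n : ℕ, x (n + 1) = A n (x n) + y n) → (∃ Cx : ℝ, ∀ n, ‖x n‖ ≤ Cx) →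
      ∀ n, ‖x n‖ ≤ c * Cy := by
  classical
  -- packaging of bounded functions
  set mk : ∀ (f : ℕ → X) (C : ℝ), (∀ n, ‖f n‖ ≤ C) → (ℕ →ᵇ X) :=
    fun f C h => BoundedContinuousFunction.ofNormedAddCommGroup f
      continuous_of_discreteTopology C h with hmk
  have mk_apply : ∀ f C h n, (mk f C h) n = f n := fun f C h n => rfl
  -- existence of solutions in the space of bounded functions
  have hsol : ∀ yb : ℕ →ᵇ X, ∃ xb : ℕ →ᵇ X, xb 0 ∈ Z ∧
      ∀ n : ℕ, xb (n + 1) = A n (xb n) + yb n := by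
    intro yb
    obtain ⟨x, hx0, ⟨Cx, hCx⟩, hrec⟩ := exist_sol A hadm Z hZspan yb ‖yb‖
      (fun n => yb.norm_coe_le_norm n)
    exact ⟨mk x Cx hCx, hx0, fun n => hrec n⟩
  choose T hT0 hTrec using hsol
  -- uniqueness
  have huniq : ∀ (yb xb : ℕ →ᵇ X), xb 0 ∈ Z →
      (∀ n : ℕ, xb (n + 1) = A n (xb n) + yb n) → xb = T yb := by
    intro yb xb h0 hr
    have := uniq_sol A Z hZdisj yb xb (T yb) h0 (hT0 yb) hr (hTrec yb)
      ⟨‖xb‖, fun n => xb.norm_coe_le_norm n⟩ ⟨‖T yb‖, fun n => (T yb).norm_coe_le_norm n⟩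
    ext n
    exact congrFun this n
  -- linearity
  have hadd : ∀ a b, T (a + b) = T a + T b := by
    intro a b
    refine (huniq (a + b) (T a + T b) ?_ ?_).symm
    · show T a 0 + T b 0 ∈ Z
      exact add_mem (hT0 a) (hT0 b)
    · intro n
      show T a (n+1) + T b (n+1) = A n (T a n + T b n) + (a n + b n)
      rw [hTrec a n, hTrec b n, map_add]
      abel
  have hsmul : ∀ (r : ℝ) (a), T (r • a) = r • T a := by
    intro r a
    refine (huniq (r • a) (r • T a) ?_ ?_).symm
    · show r • (T a 0) ∈ Z
      exact Z.smul_mem r (hT0 a)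
    · intro n
      show r • (T a (n+1)) = A n (r • T a n) + r • (a n)
      rw [hTrec a n, map_smul, smul_add]
  let Tlin : (ℕ →ᵇ X) →ₗ[ℝ] (ℕ →ᵇ X) :=
    { toFun := T, map_add' := hadd, map_smul' := hsmul }
  have hcont : Continuous Tlin := by
    apply Tlin.continuous_of_seq_closed_graph
    intro u yy xx hu hTu
    refine huniq yy xx ?_ ?_
    · have htend : Filter.Tendsto (fun k => (Tlin (u k)) 0) Filter.atTop (nhds (xx 0)) :=
        ((continuous_eval_const _).tendsto _).comp hTu
      exact hZc.mem_of_tendsto htend (Filter.Eventually.of_forall fun k => hT0 (u k))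
    · intro n
      have h1 : Filter.Tendsto (fun k => (Tlin (u k)) (n+1)) Filter.atTop (nhds (xx (n+1))) :=
        ((continuous_eval_const _).tendsto _).comp hTu
      have h2 : Filter.Tendsto (fun k => (Tlin (u k)) (n+1)) Filter.atTop
          (nhds (A n (xx n) + yy n)) := by
        have h3 : Filter.Tendsto (fun k => (Tlin (u k)) n) Filter.atTop (nhds (xx n)) :=
          ((continuous_eval_const _).tendsto _).comp hTu
        have h4 : Filter.Tendsto (fun k => (u k) n) Filter.atTop (nhds (yy n)) :=
          ((continuous_eval_const _).tendsto _).comp hu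
        have h5 := (((A n).continuous.tendsto _).comp h3).add h4
        refine h5.congr fun k => ?_
        exact (hTrec (u k) n).symm
      exact tendsto_nhds_unique h1 h2
  let Tcl : (ℕ →ᵇ X) →L[ℝ] (ℕ →ᵇ X) := ⟨Tlin, hcont⟩
  refine ⟨max ‖Tcl‖ 1, le_max_right _ _, ?_⟩
  intro y x Cy hy hx0 hrec hb
  obtain ⟨Cx, hCx⟩ := hb
  have hCy0 : 0 ≤ Cy := le_trans (norm_nonneg _) (hy 0)
  set yb := mk y Cy hy with hyb
  set xb := mk x Cx hCx with hxb
  have hxT : xb = T yb := huniq yb xb hx0 (fun n => hrec n)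
  have hyn : ‖yb‖ ≤ Cy := by
    rw [BoundedContinuousFunction.norm_le hCy0]
    exact hy
  intro n
  have h1 : ‖x n‖ ≤ ‖xb‖ := xb.norm_coe_le_norm n
  have h2 : ‖xb‖ = ‖Tcl yb‖ := by rw [hxT]; rfl
  have h3 : ‖Tcl yb‖ ≤ ‖Tcl‖ * ‖yb‖ := Tcl.le_opNorm yb
  calc ‖x n‖ ≤ ‖Tcl‖ * ‖yb‖ := by rw [h2] at h1; exact le_trans h1 h3
  _ ≤ max ‖Tcl‖ 1 * Cy :=
      mul_le_mul (le_max_left _ _) hyn (norm_nonneg _) (le_trans (norm_nonneg _) (le_max_left _ _))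

end DichoAux
namespace DichoAux

variable {X : Type u} [NormedAddCommGroup X] [NormedSpace ℝ X]

/-- The key admissibility estimate. -/
def KeyProp (A : ℤ → X →L[ℝ] X) (Z : Submodule ℝ X) (c : ℝ) : Prop :=
  ∀ (y x : ℕ → X) (Cy : ℝ), (∀ n, ‖y n‖ ≤ Cy) → x 0 ∈ Z →
    (∀ n : ℕ, x (n + 1) = A n (x n) + y n) → (∃ Cx : ℝ, ∀ n, ‖x n‖ ≤ Cx) →
    ∀ n, ‖x n‖ ≤ c * Cy

/-- Stable space at time `n`. -/
def Sat (A : ℤ → X →L[ℝ] X) (n : ℕ) : Set X :=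
  {v : X | ∃ C : ℝ, ∀ m, n ≤ m → ‖PsiN A n m v‖ ≤ C}

lemma bd4a (A : ℤ → X →L[ℝ] X) (Z : Submodule ℝ X) (c : ℝ) (hc1 : 1 ≤ c)
    (hkey : KeyProp A Z c) (n : ℕ) (v : X) (hv : v ∈ Sat A n)
    {j m : ℕ} (hj1 : 1 ≤ j) (hnj : n ≤ j) (hjm : j ≤ m) :
    ‖PsiN A n m v‖ ≤ c * ‖PsiN A n j v‖ := by
  obtain ⟨C, hC⟩ := hv
  set u : ℕ → X := fun i => PsiN A n i v with hu
  set y : ℕ → X := fun i => if i = j - 1 then u j else 0 with hy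
  set x : ℕ → X := fun i => if j ≤ i then u i else 0 with hx
  have hbd : ∀ i, ‖y i‖ ≤ ‖u j‖ := by
    intro i
    by_cases h : i = j - 1 <;> simp [hy, h]
  have hx0 : x 0 ∈ Z := by
    have : x 0 = 0 := by simp [hx]; omega
    rw [this]; exact Z.zero_mem
  have hrec : ∀ i : ℕ, x (i + 1) = A i (x i) + y i := by
    intro i
    by_cases h1 : j ≤ i
    · have h2 : j ≤ i + 1 := by omega
      have h3 : ¬ (i = j - 1) := by omega
      simp only [hx, hy, if_pos h1, if_pos h2, if_neg h3, add_zero]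
      exact psiN_succ_apply A (le_trans hnj h1) v
    · by_cases h2 : i + 1 = j
      · have h3 : i = j - 1 := by omega
        have e1 : x (i+1) = u j := by simp only [hx]; rw [h2, if_pos (le_refl j)]
        have e2 : x i = 0 := by simp only [hx]; rw [if_neg h1]
        have e3 : y i = u j := by simp only [hy]; rw [if_pos h3]
        rw [e1, e2, e3, map_zero, zero_add]
      · have h3 : ¬ (j ≤ i + 1) := by omega
        have h4 : ¬ (i = j - 1) := by omega
        simp only [hx, hy, if_neg h1, if_neg h3, if_neg h4, map_zero, zero_add]
  have hxb : ∃ Cx : ℝ, ∀ i, ‖x i‖ ≤ Cx := by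
    refine ⟨max C 0, fun i => ?_⟩
    by_cases h : j ≤ i
    · simp only [hx, if_pos h]
      exact le_max_of_le_left (hC i (le_trans hnj h))
    · simp only [hx, if_neg h, norm_zero, le_max_iff, le_refl, or_true]
  have hk := hkey y x ‖u j‖ hbd hx0 hrec hxb m
  have e : x m = u m := by simp only [hx]; rw [if_pos hjm]
  rw [e] at hk
  exact hk

lemma bd5a (A : ℤ → X →L[ℝ] X) (Z : Submodule ℝ X) (c : ℝ) (hc1 : 1 ≤ c)
    (hkey : KeyProp A Z c) (z : X) (hz : z ∈ Z)
    {j i : ℕ} (hji : j ≤ i) :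
    ‖PsiN A 0 j z‖ ≤ c * ‖PsiN A 0 i z‖ := by
  set w : ℕ → X := fun t => PsiN A 0 t z with hw
  rcases eq_or_lt_of_le hji with h | hlt
  · subst h
    nlinarith [norm_nonneg (w j), norm_nonneg (PsiN A 0 j z)]
  · have hi1 : 1 ≤ i := by omega
    set x : ℕ → X := fun t => if t < i then -(w t) else 0 with hx
    set y : ℕ → X := fun t => if t = i - 1 then w i else 0 with hy
    have hbd : ∀ t, ‖y t‖ ≤ ‖w i‖ := by
      intro t
      by_cases h : t = i - 1 <;> simp [hy, h]
    have hx0 : x 0 ∈ Z := by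
      have h0 : x 0 = -(w 0) := by simp [hx]; omega
      rw [h0]
      have : w 0 = z := psiN_self_apply A 0 z
      rw [this]; exact neg_mem hz
    have hrec : ∀ t : ℕ, x (t + 1) = A t (x t) + y t := by
      intro t
      have hwrec : w (t + 1) = A t (w t) := psiN_succ_apply A (Nat.zero_le t) z
      by_cases h1 : t + 1 < i
      · have h2 : t < i := by omega
        have h3 : ¬ (t = i - 1) := by omega
        simp only [hx, hy, if_pos h1, if_pos h2, if_neg h3, add_zero, hwrec, map_neg]
      · by_cases h2 : t + 1 = i
        · have h3 : t = i - 1 := by omega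
          have h4 : t < i := by omega
          have e1 : x (t+1) = 0 := by simp only [hx]; rw [if_neg h1]
          have e2 : x t = -(w t) := by simp only [hx]; rw [if_pos h4]
          have e3 : y t = w i := by simp only [hy]; rw [if_pos h3]
          rw [e1, e2, e3, map_neg, ← hwrec, h2]
          abel
        · have h3 : ¬ (t + 1 < i) := by omega
          have h4 : ¬ (t < i) := by omega
          have h5 : ¬ (t = i - 1) := by omega
          simp only [hx, hy, if_neg h3, if_neg h4, if_neg h5, map_zero, zero_add]
    have hxb : ∃ Cx : ℝ, ∀ t, ‖x t‖ ≤ Cx := by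
      refine ⟨∑ s ∈ Finset.range i, ‖w s‖, fun t => ?_⟩
      by_cases h : t < i
      · simp only [hx, if_pos h, norm_neg]
        exact Finset.single_le_sum (f := fun s => ‖w s‖) (fun s _ => norm_nonneg _)
          (Finset.mem_range.2 h)
      · simp only [hx, if_neg h, norm_zero]
        exact Finset.sum_nonneg fun s _ => norm_nonneg _
    have hk := hkey y x ‖w i‖ hbd hx0 hrec hxb j
    have hj : x j = -(w j) := by simp [hx, hlt]
    rw [hj, norm_neg] at hk
    exact hk

end DichoAux
namespace DichoAux

variable {X : Type u} [NormedAddCommGroup X] [NormedSpace ℝ X]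

lemma bd4b (A : ℤ → X →L[ℝ] X) (Z : Submodule ℝ X) (c : ℝ) (hc1 : 1 ≤ c)
    (hkey : KeyProp A Z c) (n : ℕ) (v : X) (hv : v ∈ Sat A n)
    {j m : ℕ} (hj1 : 1 ≤ j) (hnj : n ≤ j) (hjm : j ≤ m) :
    ((m:ℝ) - j + 1) * ‖PsiN A n m v‖ ≤ c^2 * ‖PsiN A n j v‖ := by
  obtain ⟨C, hC⟩ := hv
  have hC0 : 0 ≤ C := le_trans (norm_nonneg _) (hC n le_rfl)
  set u : ℕ → X := fun i => PsiN A n i v with hu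
  have hcoef : (0:ℝ) ≤ (m:ℝ) - j + 1 := by
    have : (j:ℝ) ≤ m := by exact_mod_cast hjm
    linarith
  by_cases hzero : ∃ t, j ≤ t ∧ t ≤ m ∧ u t = 0
  · obtain ⟨t, ht1, ht2, ht3⟩ := hzero
    have hum : u m = 0 := by
      have h := psiN_comp_apply A (le_trans hnj ht1) ht2 v
      show PsiN A n m v = 0
      rw [← h]
      show PsiN A t m (u t) = 0
      rw [ht3, map_zero]
    show ((m:ℝ) - j + 1) * ‖u m‖ ≤ c^2 * ‖u j‖
    rw [hum, norm_zero, mul_zero]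
    positivity
  · push_neg at hzero
    have hupos : ∀ t, j ≤ t → t ≤ m → 0 < ‖u t‖ :=
      fun t h1 h2 => norm_pos_iff.2 (hzero t h1 h2)
    set d : ℕ → ℝ := fun i => ∑ t ∈ Finset.Icc j (min i m), ‖u t‖⁻¹ with hd
    have hdnn : ∀ i, 0 ≤ d i := fun i => Finset.sum_nonneg fun t _ => by positivity
    have hdm_eq : d m = ∑ t ∈ Finset.Icc j m, ‖u t‖⁻¹ := by
      simp only [hd, min_self]
    have hdmono : ∀ i, d i ≤ d m := by
      intro i
      rw [hdm_eq]
      refine Finset.sum_le_sum_of_subset_of_nonneg ?_ (fun t _ _ => by positivity)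
      apply Finset.Icc_subset_Icc_right (min_le_right i m)
    set x : ℕ → X := fun i => d i • u i with hx
    set y : ℕ → X := fun i => if j ≤ i + 1 ∧ i + 1 ≤ m then ‖u (i+1)‖⁻¹ • u (i+1) else 0
      with hy
    have hybd : ∀ i, ‖y i‖ ≤ 1 := by
      intro i
      by_cases h : j ≤ i + 1 ∧ i + 1 ≤ m
      · simp only [hy, if_pos h, norm_smul, norm_inv, norm_norm]
        rw [inv_mul_cancel₀ (ne_of_gt (hupos (i+1) h.1 h.2))]
      · simp only [hy, if_neg h, norm_zero]; norm_num
    have hx0 : x 0 ∈ Z := by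
      have h0 : d 0 = 0 := by
        simp only [hd]
        rw [Finset.Icc_eq_empty (by omega), Finset.sum_empty]
      show d 0 • u 0 ∈ Z
      rw [h0, zero_smul]
      exact Z.zero_mem
    have hdi0 : ∀ i, i < j → d i = 0 := by
      intro i hij
      simp only [hd]
      rw [Finset.Icc_eq_empty (by omega), Finset.sum_empty]
    have hrec : ∀ i : ℕ, x (i + 1) = A i (x i) + y i := by
      intro i
      show d (i+1) • u (i+1) = A i (d i • u i) + y i
      by_cases h1 : i + 1 < j
      · rw [hdi0 _ h1, hdi0 _ (by omega), zero_smul, zero_smul, map_zero, zero_add]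
        have : ¬ (j ≤ i + 1 ∧ i + 1 ≤ m) := by omega
        simp only [hy, if_neg this]
      · have hji1 : j ≤ i + 1 := by omega
        have hAx : A i (d i • u i) = d i • u (i+1) := by
          by_cases h2 : j ≤ i
          · rw [map_smul]
            congr 1
            exact (psiN_succ_apply A (le_trans hnj h2) v).symm
          · rw [hdi0 i (by omega), zero_smul, zero_smul, map_zero]
        rw [hAx]
        by_cases h3 : i + 1 ≤ m
        · have hstep : d (i+1) = d i + ‖u (i+1)‖⁻¹ := by
            simp only [hd]
            rw [min_eq_left h3, min_eq_left (by omega)]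
            exact Finset.sum_Icc_succ_top hji1 _
          rw [hstep, add_smul]
          congr 1
          simp only [hy, if_pos (And.intro hji1 h3)]
        · have hstep : d (i+1) = d i := by
            simp only [hd]
            rw [min_eq_right (by omega), min_eq_right (by omega)]
          rw [hstep]
          have : ¬ (j ≤ i + 1 ∧ i + 1 ≤ m) := by omega
          simp only [hy, if_neg this, add_zero]
    have hubd : ∀ i, ‖u i‖ ≤ C + ‖v‖ := by
      intro i
      rcases le_or_gt n i with h | h
      · exact le_trans (hC i h) (by linarith [norm_nonneg v])
      · have : u i = v := by
          show PsiN A n i v = v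
          rw [psiN_le A (le_of_lt h)]
          rfl
        rw [this]
        linarith
    have hxb : ∃ Cx : ℝ, ∀ i, ‖x i‖ ≤ Cx := by
      refine ⟨d m * (C + ‖v‖), fun i => ?_⟩
      show ‖d i • u i‖ ≤ _
      rw [norm_smul, Real.norm_eq_abs, abs_of_nonneg (hdnn i)]
      exact mul_le_mul (hdmono i) (hubd i) (norm_nonneg _) (hdnn m)
    have hk := hkey y x 1 hybd hx0 hrec hxb m
    have hxm : ‖x m‖ = d m * ‖u m‖ := by
      show ‖d m • u m‖ = _
      rw [norm_smul, Real.norm_eq_abs, abs_of_nonneg (hdnn m)]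
    rw [hxm, mul_one] at hk
    -- lower bound on d m
    have hlow : ((m:ℝ) - j + 1) ≤ d m * (c * ‖u j‖) := by
      have hcard : ∑ t ∈ Finset.Icc j m, (1:ℝ) = (m:ℝ) - j + 1 := by
        rw [Finset.sum_const, Nat.card_Icc, nsmul_eq_mul, mul_one]
        have : j ≤ m + 1 := by omega
        push_cast [this]
        ring
      rw [← hcard, hdm_eq, Finset.sum_mul]
      refine Finset.sum_le_sum fun t ht => ?_
      rw [Finset.mem_Icc] at ht
      have h1 : ‖u t‖ ≤ c * ‖u j‖ := bd4a A Z c hc1 hkey n v ⟨C, hC⟩ hj1 hnj ht.1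
      have h2 : 0 < ‖u t‖ := hupos t ht.1 ht.2
      calc (1:ℝ) = ‖u t‖⁻¹ * ‖u t‖ := (inv_mul_cancel₀ (ne_of_gt h2)).symm
      _ ≤ ‖u t‖⁻¹ * (c * ‖u j‖) := by
          apply mul_le_mul_of_nonneg_left h1 (by positivity)
    have hujpos : 0 < ‖u j‖ := hupos j le_rfl hjm
    have hum0 : 0 ≤ ‖u m‖ := norm_nonneg _
    show ((m:ℝ) - j + 1) * ‖u m‖ ≤ c^2 * ‖u j‖
    nlinarith [mul_le_mul_of_nonneg_right hlow hum0, mul_le_mul_of_nonneg_right hk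
      (le_of_lt (mul_pos (lt_of_lt_of_le zero_lt_one hc1) hujpos))]
  -- note bd4a applied to original hv; we rebuilt hv as ⟨C, hC⟩

end DichoAux
namespace DichoAux

variable {X : Type u} [NormedAddCommGroup X] [NormedSpace ℝ X]

lemma bd5b (A : ℤ → X →L[ℝ] X) (Z : Submodule ℝ X) (c : ℝ) (hc1 : 1 ≤ c)
    (hkey : KeyProp A Z c) (z : X) (hz : z ∈ Z) {k m : ℕ} (hkm : k ≤ m) :
    ((m:ℝ) - k + 1) * ‖PsiN A 0 k z‖ ≤ (2 * c^2) * ‖PsiN A 0 m z‖ := by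
  set w : ℕ → X := fun t => PsiN A 0 t z with hw
  have hcoef : (0:ℝ) ≤ (m:ℝ) - k + 1 := by
    have : (k:ℝ) ≤ m := by exact_mod_cast hkm
    linarith
  by_cases hz0 : z = 0
  · have : ∀ t, w t = 0 := fun t => by
      show PsiN A 0 t z = 0; rw [hz0, map_zero]
    show ((m:ℝ) - k + 1) * ‖w k‖ ≤ _ * ‖w m‖
    rw [this k, this m]
    simp
  · have hwn0 : ∀ t, w t ≠ 0 := by
      intro t ht
      apply hz0
      have h1 : ‖PsiN A 0 0 z‖ ≤ c * ‖PsiN A 0 t z‖ := bd5a A Z c hc1 hkey z hz (Nat.zero_le t)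
      rw [psiN_self_apply] at h1
      have : ‖w t‖ = 0 := by rw [ht, norm_zero]
      have h2 : ‖PsiN A 0 t z‖ = 0 := this
      rw [h2, mul_zero] at h1
      exact norm_le_zero_iff.1 h1
    have hwpos : ∀ t, 0 < ‖w t‖ := fun t => norm_pos_iff.2 (hwn0 t)
    rcases eq_or_lt_of_le hkm with heq | hlt
    · subst heq
      show ((k:ℝ) - k + 1) * ‖w k‖ ≤ (2 * c^2) * ‖w k‖
      have h1 := hwpos k
      have hcc : (1:ℝ) ≤ c^2 := by nlinarith
      nlinarith
    · -- k < m
      set d : ℕ → ℝ := fun t => ∑ i ∈ Finset.Icc (max t k + 1) m, ‖w i‖⁻¹ with hd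
      have hdnn : ∀ t, 0 ≤ d t := fun t => Finset.sum_nonneg fun i _ => by positivity
      set x : ℕ → X := fun t => -(d t • w t) with hx
      set y : ℕ → X := fun t => if k ≤ t ∧ t + 1 ≤ m then ‖w (t+1)‖⁻¹ • w (t+1) else 0 with hy
      have hybd : ∀ t, ‖y t‖ ≤ 1 := by
        intro t
        by_cases h : k ≤ t ∧ t + 1 ≤ m
        · simp only [hy, if_pos h, norm_smul, norm_inv, norm_norm]
          rw [inv_mul_cancel₀ (ne_of_gt (hwpos (t+1)))]
        · simp only [hy, if_neg h, norm_zero]; norm_num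
      have hx0 : x 0 ∈ Z := by
        show -(d 0 • w 0) ∈ Z
        have : w 0 = z := psiN_self_apply A 0 z
        rw [this]
        exact neg_mem (Z.smul_mem _ hz)
      have hrec : ∀ t : ℕ, x (t + 1) = A t (x t) + y t := by
        intro t
        show -(d (t+1) • w (t+1)) = A t (-(d t • w t)) + y t
        have hwrec : w (t+1) = A t (w t) := psiN_succ_apply A (Nat.zero_le t) z
        rw [map_neg, map_smul, ← hwrec]
        have hid : d t = d (t+1) + (if k ≤ t ∧ t + 1 ≤ m then ‖w (t+1)‖⁻¹ else 0) := ?_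
        · by_cases h : k ≤ t ∧ t + 1 ≤ m
          · rw [if_pos h] at hid
            simp only [hy, if_pos h]
            rw [hid, add_smul]
            module
          · rw [if_neg h, add_zero] at hid
            simp only [hy, if_neg h]
            rw [hid, add_zero]
        -- prove the identity
        by_cases h1 : t < k
        · have e1 : max t k = k := by omega
          have e2 : max (t+1) k = k := by omega
          have h2 : ¬ (k ≤ t ∧ t + 1 ≤ m) := by omega
          rw [if_neg h2, add_zero]
          simp only [hd, e1, e2]
        · have e1 : max t k = t := by omega
          have e2 : max (t+1) k = t + 1 := by omega
          by_cases h3 : t + 1 ≤ m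
          · have h2 : k ≤ t ∧ t + 1 ≤ m := by omega
            rw [if_pos h2]
            simp only [hd, e1, e2]
            have hins : Finset.Icc (t+1) m = insert (t+1) (Finset.Icc (t+1+1) m) := by
              ext a
              simp only [Finset.mem_Icc, Finset.mem_insert]
              omega
            rw [hins, Finset.sum_insert (by simp only [Finset.mem_Icc]; omega)]
            ring
          · have h2 : ¬ (k ≤ t ∧ t + 1 ≤ m) := by omega
            rw [if_neg h2, add_zero]
            simp only [hd, e1, e2]
            rw [Finset.Icc_eq_empty (by omega), Finset.Icc_eq_empty (by omega)]
      have hxb : ∃ Cx : ℝ, ∀ t, ‖x t‖ ≤ Cx := by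
        refine ⟨∑ t ∈ Finset.range m, d t * ‖w t‖, fun t => ?_⟩
        have hxt : ‖x t‖ = d t * ‖w t‖ := by
          show ‖-(d t • w t)‖ = _
          rw [norm_neg, norm_smul, Real.norm_eq_abs, abs_of_nonneg (hdnn t)]
        rw [hxt]
        by_cases h : t < m
        · exact Finset.single_le_sum (f := fun s => d s * ‖w s‖)
            (fun s _ => mul_nonneg (hdnn s) (norm_nonneg _)) (Finset.mem_range.2 h)
        · have : d t = 0 := by
            simp only [hd]
            rw [Finset.Icc_eq_empty (by omega), Finset.sum_empty]
          rw [this, zero_mul]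
          exact Finset.sum_nonneg fun s _ => mul_nonneg (hdnn s) (norm_nonneg _)
      have hk := hkey y x 1 hybd hx0 hrec hxb k
      have hxk : ‖x k‖ = d k * ‖w k‖ := by
        show ‖-(d k • w k)‖ = _
        rw [norm_neg, norm_smul, Real.norm_eq_abs, abs_of_nonneg (hdnn k)]
      rw [hxk, mul_one] at hk
      have hdk_eq : d k = ∑ i ∈ Finset.Icc (k+1) m, ‖w i‖⁻¹ := by
        simp only [hd, max_self]
      have hlow : ((m:ℝ) - k) ≤ d k * (c * ‖w m‖) := by
        have hcard : ∑ i ∈ Finset.Icc (k+1) m, (1:ℝ) = (m:ℝ) - k := by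
          rw [Finset.sum_const, Nat.card_Icc, nsmul_eq_mul, mul_one]
          have he : m + 1 - (k+1) = m - k := by omega
          rw [he, Nat.cast_sub hkm]
        rw [← hcard, hdk_eq, Finset.sum_mul]
        refine Finset.sum_le_sum fun i hi => ?_
        rw [Finset.mem_Icc] at hi
        have h1 : ‖w i‖ ≤ c * ‖w m‖ := bd5a A Z c hc1 hkey z hz hi.2
        calc (1:ℝ) = ‖w i‖⁻¹ * ‖w i‖ := (inv_mul_cancel₀ (ne_of_gt (hwpos i))).symm
        _ ≤ ‖w i‖⁻¹ * (c * ‖w m‖) := mul_le_mul_of_nonneg_left h1 (by positivity)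
      have h1m : (1:ℝ) ≤ (m:ℝ) - k := by
        have : (k:ℝ) + 1 ≤ m := by exact_mod_cast hlt
        linarith
      have hwk := hwpos k
      have hwm := hwpos m
      show ((m:ℝ) - k + 1) * ‖w k‖ ≤ (2 * c^2) * ‖w m‖
      nlinarith [mul_le_mul_of_nonneg_right hlow (norm_nonneg (w k)),
        mul_le_mul_of_nonneg_right hk (le_of_lt (mul_pos (lt_of_lt_of_le zero_lt_one hc1) hwm))]

end DichoAux
namespace DichoAux

variable {X : Type u} [NormedAddCommGroup X] [NormedSpace ℝ X]

lemma decay_abstract (c₁ : ℝ) (hc₁ : 1 ≤ c₁) (g : ℕ → ℝ) (hg : ∀ t, 0 ≤ g t)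
    (lo hi : ℕ)
    (H : ∀ j m : ℕ, lo ≤ j → j ≤ m → m ≤ hi → ((m:ℝ) - j + 1) * g m ≤ c₁ * g j) :
    ∀ j m : ℕ, lo ≤ j → j ≤ m → m ≤ hi →
      g m ≤ (c₁ * Real.exp 1) *
        Real.exp (-(((m:ℝ) - j) / (⌈c₁ * Real.exp 1⌉₊ : ℝ))) * g j := by
  set N : ℕ := ⌈c₁ * Real.exp 1⌉₊ with hNdef
  have he2 : (2:ℝ) ≤ Real.exp 1 := by
    have := Real.add_one_le_exp (1:ℝ)
    linarith
  have hepos : (0:ℝ) < Real.exp 1 := Real.exp_pos 1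
  have hce : (1:ℝ) ≤ c₁ * Real.exp 1 := by nlinarith
  have hN : c₁ * Real.exp 1 ≤ (N:ℝ) := Nat.le_ceil _
  have hNpos : (0:ℝ) < (N:ℝ) := by linarith
  have hNposn : 0 < N := by exact_mod_cast hNpos
  have main : ∀ d : ℕ, ∀ j m : ℕ, m - j = d → lo ≤ j → j ≤ m → m ≤ hi →
      g m ≤ (c₁ * Real.exp 1) * Real.exp (-(((m:ℝ) - j) / (N:ℝ))) * g j := by
    intro d
    induction d using Nat.strong_induction_on with
    | _ d ih =>
      intro j m hd hlo hjm hhi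
      have hjmr : (j:ℝ) ≤ (m:ℝ) := by exact_mod_cast hjm
      by_cases hsmall : m - j < N
      · have h1 : g m ≤ c₁ * g j := by
          have hH := H j m hlo hjm hhi
          nlinarith [hg m]
        have h2 : Real.exp (-1) ≤ Real.exp (-(((m:ℝ) - j)/(N:ℝ))) := by
          apply Real.exp_le_exp.2
          rw [neg_le_neg_iff, div_le_one hNpos]
          have hc : ((m - j : ℕ):ℝ) < (N:ℝ) := by exact_mod_cast hsmall
          rw [Nat.cast_sub hjm] at hc
          linarith
        have hee : Real.exp 1 * Real.exp (-1) = 1 := by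
          rw [← Real.exp_add]; norm_num
        calc g m ≤ c₁ * g j := h1
        _ = (c₁ * Real.exp 1) * Real.exp (-1) * g j := by
            rw [mul_assoc c₁, hee, mul_one]
        _ ≤ (c₁ * Real.exp 1) * Real.exp (-(((m:ℝ) - j)/(N:ℝ))) * g j := by
            apply mul_le_mul_of_nonneg_right _ (hg j)
            apply mul_le_mul_of_nonneg_left h2 (by positivity)
      · have hjN : j + N ≤ m := by omega
        have hstep : g (j + N) ≤ Real.exp (-1) * g j := by
          have hH := H j (j+N) hlo (by omega) (by omega)
          have hco : ((j+N:ℕ):ℝ) - (j:ℝ) + 1 = (N:ℝ) + 1 := by push_cast; ring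
          rw [hco] at hH
          rw [Real.exp_neg, inv_mul_eq_div, le_div_iff₀ hepos]
          nlinarith [hg (j+N), hg j, mul_le_mul_of_nonneg_right hH (le_of_lt hepos),
            mul_le_mul_of_nonneg_right (le_trans hN (by linarith : (N:ℝ) ≤ (N:ℝ)+1)) (hg j)]
        have ihm := ih (d - N) (by omega) (j + N) m (by omega) (by omega) (by omega) hhi
        have hcast : ((j+N:ℕ):ℝ) = (j:ℝ) + (N:ℝ) := by push_cast; ring
        calc g m ≤ (c₁ * Real.exp 1) * Real.exp (-(((m:ℝ) - ((j+N:ℕ):ℝ))/(N:ℝ))) * g (j+N) :=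
              ihm
        _ ≤ (c₁ * Real.exp 1) * Real.exp (-(((m:ℝ) - ((j+N:ℕ):ℝ))/(N:ℝ)))
              * (Real.exp (-1) * g j) := by
            apply mul_le_mul_of_nonneg_left hstep (by positivity)
        _ = (c₁ * Real.exp 1) * Real.exp (-(((m:ℝ) - j)/(N:ℝ))) * g j := by
            rw [hcast, mul_assoc, ← mul_assoc (Real.exp _) (Real.exp (-1)) (g j),
              ← Real.exp_add, ← mul_assoc]
            congr 2
            field_simp
            ring
  exact fun j m h1 h2 h3 => main (m - j) j m rfl h1 h2 h3

lemma bd4c (A : ℤ → X →L[ℝ] X) (Z : Submodule ℝ X) (c : ℝ) (hc1 : 1 ≤ c)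
    (hkey : KeyProp A Z c) (n : ℕ) (v : X) (hv : v ∈ Sat A n)
    {j m : ℕ} (hnj : n ≤ j) (hjm : j ≤ m) :
    ((m:ℝ) - j + 1) * ‖PsiN A n m v‖ ≤ (2 * c^2 * max ‖A 0‖ 1) * ‖PsiN A n j v‖ := by
  have hma : (1:ℝ) ≤ max ‖A 0‖ 1 := le_max_right _ _
  have hc2 : (1:ℝ) ≤ c^2 := by nlinarith
  rcases Nat.eq_zero_or_pos j with hj0 | hj1
  · subst hj0
    have hn0 : n = 0 := Nat.le_zero.1 hnj
    subst hn0
    rcases Nat.eq_zero_or_pos m with hm0 | hm1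
    · subst hm0
      have h := norm_nonneg (PsiN A 0 0 v)
      simp only [Nat.cast_zero]
      have h2 : (1:ℝ) ≤ 2*c^2*(max ‖A 0‖ 1) := by nlinarith
      nlinarith [mul_le_mul_of_nonneg_right h2 h]
    · have hb := bd4b A Z c hc1 hkey 0 v hv (le_refl 1) (Nat.zero_le 1) hm1
      have hu1 : PsiN A 0 1 v = A 0 v := by
        have h := psiN_succ_apply A (le_refl 0) v
        rw [psiN_self_apply] at h
        rw [h]
        norm_num
      rw [hu1] at hb
      have hA0 : ‖A 0 v‖ ≤ max ‖A 0‖ 1 * ‖v‖ := by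
        calc ‖A 0 v‖ ≤ ‖A 0‖ * ‖v‖ := (A 0).le_opNorm v
        _ ≤ max ‖A 0‖ 1 * ‖v‖ := mul_le_mul_of_nonneg_right (le_max_left _ _) (norm_nonneg _)
      have hm1r : (1:ℝ) ≤ (m:ℝ) := by exact_mod_cast hm1
      have h0 : PsiN A 0 0 v = v := psiN_self_apply A 0 v
      rw [h0]
      simp only [Nat.cast_zero, sub_zero]
      push_cast at hb
      have hcm : ((m:ℝ) - 1 + 1) = (m:ℝ) := by ring
      rw [hcm] at hb
      have hnn := norm_nonneg (PsiN A 0 m v)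
      have hcpos : (0:ℝ) < c^2 := by nlinarith
      nlinarith [mul_le_mul_of_nonneg_left hA0 (le_of_lt hcpos)]
  · have hb := bd4b A Z c hc1 hkey n v hv hj1 hnj hjm
    have : c^2 ≤ 2 * c^2 * max ‖A 0‖ 1 := by nlinarith
    nlinarith [norm_nonneg (PsiN A n j v), norm_nonneg (PsiN A n m v),
      mul_le_mul_of_nonneg_right this (norm_nonneg (PsiN A n j v))]

lemma stable_decay (A : ℤ → X →L[ℝ] X) (Z : Submodule ℝ X) (c : ℝ) (hc1 : 1 ≤ c)
    (hkey : KeyProp A Z c) (n : ℕ) (v : X) (hv : v ∈ Sat A n)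
    {j m : ℕ} (hnj : n ≤ j) (hjm : j ≤ m) :
    ‖PsiN A n m v‖ ≤ ((2 * c^2 * max ‖A 0‖ 1) * Real.exp 1) *
      Real.exp (-(((m:ℝ) - j) / (⌈(2 * c^2 * max ‖A 0‖ 1) * Real.exp 1⌉₊ : ℝ)))
      * ‖PsiN A n j v‖ := by
  have hc₁ : (1:ℝ) ≤ 2 * c^2 * max ‖A 0‖ 1 := by
    have := le_max_right ‖A 0‖ 1
    nlinarith
  exact decay_abstract (2 * c^2 * max ‖A 0‖ 1) hc₁ (fun t => ‖PsiN A n t v‖)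
    (fun t => norm_nonneg _) n m
    (fun j' m' h1 h2 _ => bd4c A Z c hc1 hkey n v hv h1 h2) j m hnj hjm le_rfl

lemma unstable_decay (A : ℤ → X →L[ℝ] X) (Z : Submodule ℝ X) (c : ℝ) (hc1 : 1 ≤ c)
    (hkey : KeyProp A Z c) (z : X) (hz : z ∈ Z) {k m : ℕ} (hkm : k ≤ m) :
    ‖PsiN A 0 k z‖ ≤ ((2 * c^2) * Real.exp 1) *
      Real.exp (-(((m:ℝ) - k) / (⌈(2 * c^2) * Real.exp 1⌉₊ : ℝ)))
      * ‖PsiN A 0 m z‖ := by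
  have hc₁ : (1:ℝ) ≤ 2 * c^2 := by nlinarith
  have H : ∀ j' m' : ℕ, 0 ≤ j' → j' ≤ m' → m' ≤ m →
      ((m':ℝ) - j' + 1) * ‖PsiN A 0 (m - m') z‖ ≤ (2 * c^2) * ‖PsiN A 0 (m - j') z‖ := by
    intro j' m' _ h2 h3
    have hb := bd5b A Z c hc1 hkey z hz (show m - m' ≤ m - j' by omega)
    have hco : ((m - j' : ℕ):ℝ) - ((m - m' : ℕ):ℝ) + 1 = (m':ℝ) - j' + 1 := by
      rw [Nat.cast_sub (le_trans h2 h3), Nat.cast_sub h3]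
      ring
    rwa [hco] at hb
  have hres := decay_abstract (2 * c^2) hc₁ (fun t => ‖PsiN A 0 (m - t) z‖)
    (fun t => norm_nonneg _) 0 m H 0 (m - k) (Nat.zero_le _) (Nat.zero_le _) (by omega)
  have e1 : m - (m - k) = k := by omega
  have e2 : m - 0 = m := by omega
  simp only [e1, e2] at hres
  have hco : (((m - k : ℕ):ℝ) - ((0:ℕ):ℝ)) = (m:ℝ) - k := by
    rw [Nat.cast_sub hkm]
    simp
  rw [hco] at hres
  exact hres

end DichoAux
namespace DichoAux

variable {X : Type u} [NormedAddCommGroup X] [NormedSpace ℝ X]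

lemma sat_zero (A : ℤ → X →L[ℝ] X) : Sat A 0 = Sset A := by
  ext v
  rw [sset_mem_iff]
  constructor
  · rintro ⟨C, hC⟩; exact ⟨C, fun m => hC m (Nat.zero_le m)⟩
  · rintro ⟨C, hC⟩; exact ⟨C, fun m _ => hC m⟩

/-- `Sset` as a submodule. -/
def Smod (A : ℤ → X →L[ℝ] X) : Submodule ℝ X where
  carrier := Sset A
  zero_mem' := ⟨0, fun n _ => by rw [map_zero, norm_zero]⟩
  add_mem' := by
    rintro a b ⟨Ca, hCa⟩ ⟨Cb, hCb⟩
    exact ⟨Ca + Cb, fun n hn => by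
      rw [map_add]
      exact le_trans (norm_add_le _ _) (add_le_add (hCa n hn) (hCb n hn))⟩
  smul_mem' := by
    rintro r a ⟨Ca, hCa⟩
    exact ⟨‖r‖ * Ca, fun n hn => by
      rw [map_smul, norm_smul]
      exact mul_le_mul_of_nonneg_left (hCa n hn) (norm_nonneg r)⟩

lemma unifS (A : ℤ → X →L[ℝ] X) (Z : Submodule ℝ X) (c : ℝ) (hc1 : 1 ≤ c)
    (hkey : KeyProp A Z c) (v : X) (hv : v ∈ Sset A) (m : ℕ) :
    ‖PsiN A 0 m v‖ ≤ (2 * c^2 * max ‖A 0‖ 1) * ‖v‖ := by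
  have hv0 : v ∈ Sat A 0 := by rw [sat_zero]; exact hv
  have h := bd4c A Z c hc1 hkey 0 v hv0 (le_refl 0) (Nat.zero_le m)
  rw [psiN_self_apply] at h
  push_cast at h
  have h1 : (1:ℝ) ≤ (m:ℝ) - 0 + 1 := by
    have : (0:ℝ) ≤ (m:ℝ) := by positivity
    linarith
  nlinarith [norm_nonneg (PsiN A 0 m v)]

lemma sset_isClosed (A : ℤ → X →L[ℝ] X) (Z : Submodule ℝ X) (c : ℝ) (hc1 : 1 ≤ c)
    (hkey : KeyProp A Z c) : IsClosed (Sset A) := by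
  have hset : Sset A = ⋂ m : ℕ, {v : X | ‖PsiN A 0 m v‖ ≤ (2 * c^2 * max ‖A 0‖ 1) * ‖v‖} := by
    ext v
    simp only [Set.mem_iInter, Set.mem_setOf_eq]
    constructor
    · intro hv m; exact unifS A Z c hc1 hkey v hv m
    · intro hv
      rw [← sat_zero]
      exact ⟨(2 * c^2 * max ‖A 0‖ 1) * ‖v‖, fun m _ => hv m⟩
  rw [hset]
  exact isClosed_iInter fun m => isClosed_le
    ((PsiN A 0 m).continuous.norm) (continuous_const.mul continuous_norm)

/-- Existence of bounded solutions with initial condition in `Z`. -/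
def SolProp (A : ℤ → X →L[ℝ] X) (Z : Submodule ℝ X) : Prop :=
  ∀ (y : ℕ → X) (Cy : ℝ), (∀ n, ‖y n‖ ≤ Cy) →
    ∃ x : ℕ → X, x 0 ∈ Z ∧ (∃ Cx : ℝ, ∀ n, ‖x n‖ ≤ Cx) ∧
      ∀ n : ℕ, x (n + 1) = A n (x n) + y n

lemma decompose (A : ℤ → X →L[ℝ] X) (Z : Submodule ℝ X) (c : ℝ) (hc1 : 1 ≤ c)
    (hkey : KeyProp A Z c) (hsol : SolProp A Z) (n : ℕ) (hn : 1 ≤ n) (v : X) :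
    ∃ s z : X, z ∈ Z ∧ (∀ m, n ≤ m → ‖PsiN A n m s‖ ≤ c * ‖v‖) ∧
      v = s + PsiN A 0 n z := by
  obtain ⟨n', rfl⟩ : ∃ n', n = n' + 1 := ⟨n - 1, by omega⟩
  set y : ℕ → X := fun t => if t = n' then v else 0 with hy
  have hybd : ∀ t, ‖y t‖ ≤ ‖v‖ := by
    intro t; by_cases h : t = n' <;> simp [hy, h]
  obtain ⟨x, hx0, hxb, hrec⟩ := hsol y ‖v‖ hybd
  have hbnd : ∀ t, ‖x t‖ ≤ c * ‖v‖ := hkey y x ‖v‖ hybd hx0 hrec hxb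
  have hbef : ∀ t, t ≤ n' → x t = PsiN A 0 t (x 0) := by
    intro t
    induction t with
    | zero => intro _; rw [psiN_self_apply]
    | succ t ih =>
      intro ht
      have ht' : t ≤ n' := by omega
      have hyt : y t = 0 := by simp only [hy]; rw [if_neg (by omega)]
      rw [hrec t, hyt, add_zero, ih ht', psiN_succ_apply A (Nat.zero_le t)]
  have haft : ∀ m, n' + 1 ≤ m → x m = PsiN A (n'+1) m (x (n'+1)) :=
    traj_eq_psiN A x (n'+1) (fun i hi => by
      have hyt : y i = 0 := by simp only [hy]; rw [if_neg (by omega)]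
      rw [hrec i, hyt, add_zero])
  have hxn : x (n'+1) = PsiN A 0 (n'+1) (x 0) + v := by
    rw [hrec n']
    have hyt : y n' = v := by simp [hy]
    rw [hyt, hbef n' le_rfl, psiN_succ_apply A (Nat.zero_le n')]
  refine ⟨x (n'+1), -(x 0), neg_mem hx0, ?_, ?_⟩
  · intro m hm
    rw [← haft m hm]
    exact hbnd m
  · rw [map_neg, hxn]
    abel

lemma decomp_uniq (A : ℤ → X →L[ℝ] X) (Z : Submodule ℝ X) (c : ℝ) (hc1 : 1 ≤ c)
    (hkey : KeyProp A Z c) (hZdisj : ∀ v ∈ Sset A, v ∈ Z → v = (0:X))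
    (n : ℕ) (s z s' z' : X) (hz : z ∈ Z) (hz' : z' ∈ Z)
    (hs : s ∈ Sat A n) (hs' : s' ∈ Sat A n)
    (heq : s + PsiN A 0 n z = s' + PsiN A 0 n z') : s = s' ∧ z = z' := by
  have hw : PsiN A 0 n (z - z') = s' - s := by
    rw [map_sub, sub_eq_sub_iff_add_eq_add]
    rw [add_comm s (PsiN A 0 n z)] at heq
    exact heq
  obtain ⟨C, hC⟩ := hs
  obtain ⟨C', hC'⟩ := hs'
  have hmem : z - z' ∈ Sset A := by
    rw [sset_mem_iff]
    refine ⟨max (C' + C) (c * ‖s' - s‖), fun m => ?_⟩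
    rcases le_or_gt n m with h | h
    · have h1 : PsiN A 0 m (z - z') = PsiN A n m (s' - s) := by
        rw [← hw, psiN_comp_apply A (Nat.zero_le n) h]
      rw [h1]
      refine le_max_of_le_left ?_
      rw [map_sub]
      exact le_trans (norm_sub_le _ _) (add_le_add (hC' m h) (hC m h))
    · refine le_max_of_le_right ?_
      have h2 := bd5a A Z c hc1 hkey (z - z') (sub_mem hz hz') (le_of_lt h)
      rw [hw] at h2
      exact h2
  have h0 : z - z' = 0 := hZdisj _ hmem (sub_mem hz hz')
  constructor
  · rw [h0, map_zero] at hw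
    have := hw.symm
    rw [sub_eq_zero] at this
    exact this.symm
  · exact sub_eq_zero.1 h0

end DichoAux
namespace DichoAux

variable {X : Type u} [NormedAddCommGroup X] [NormedSpace ℝ X]

lemma psiN_injZ (A : ℤ → X →L[ℝ] X) (Z : Submodule ℝ X) (c : ℝ) (hc1 : 1 ≤ c)
    (hkey : KeyProp A Z c) (z : X) (hz : z ∈ Z) (n : ℕ) (h : PsiN A 0 n z = 0) : z = 0 := by
  have h1 := bd5a A Z c hc1 hkey z hz (Nat.zero_le n)
  rw [psiN_self_apply, h, norm_zero, mul_zero] at h1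
  exact norm_le_zero_iff.1 h1

lemma sat_zero_mem (A : ℤ → X →L[ℝ] X) (n : ℕ) : (0:X) ∈ Sat A n :=
  ⟨0, fun m _ => by rw [map_zero, norm_zero]⟩

lemma sat_add (A : ℤ → X →L[ℝ] X) {n : ℕ} {a b : X} (ha : a ∈ Sat A n) (hb : b ∈ Sat A n) :
    a + b ∈ Sat A n := by
  obtain ⟨Ca, hCa⟩ := ha
  obtain ⟨Cb, hCb⟩ := hb
  exact ⟨Ca + Cb, fun m hm => by
    rw [map_add]
    exact le_trans (norm_add_le _ _) (add_le_add (hCa m hm) (hCb m hm))⟩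

lemma sat_smul (A : ℤ → X →L[ℝ] X) {n : ℕ} (r : ℝ) {a : X} (ha : a ∈ Sat A n) :
    r • a ∈ Sat A n := by
  obtain ⟨Ca, hCa⟩ := ha
  exact ⟨‖r‖ * Ca, fun m hm => by
    rw [map_smul, norm_smul]
    exact mul_le_mul_of_nonneg_left (hCa m hm) (norm_nonneg r)⟩

lemma psiN_shift (A : ℤ → X →L[ℝ] X) {n m : ℕ} (hm : n + 1 ≤ m) (w : X) :
    PsiN A (n+1) m (A n w) = PsiN A n m w := by
  have h1 : PsiN A n (n+1) w = A n w := by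
    rw [psiN_succ_apply A (le_refl n), psiN_self_apply]
  rw [← h1, psiN_comp_apply A (Nat.le_succ n) hm]

end DichoAux

open DichoAux

theorem dichotomy_of_admissibility_Zplus {X : Type u} [NormedAddCommGroup X]
    [NormedSpace ℝ X] [CompleteSpace X] (A : ℤ → X →L[ℝ] X)
    (hadm : ∀ y : ℤ → X, (∃ C : ℝ, ∀ n : ℤ, 0 ≤ n → ‖y n‖ ≤ C) →
      ∃ x : ℤ → X, (∃ C : ℝ, ∀ n : ℤ, 0 ≤ n → ‖x n‖ ≤ C) ∧
        ∀ n : ℤ, 0 ≤ n → x (n + 1) = A n (x n) + y n)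
    (hcompl : IsComplementedSubspace (Sset A)) :
    ExpDichotomy {n : ℤ | 0 ≤ n} {n : ℤ | 0 ≤ n} A ∧ IsClosed (Sset A) := by
  classical
  obtain ⟨Z, hZc, hZdisj, hZspan⟩ := hcompl
  obtain ⟨c, hc1, hkey⟩ := key A hadm Z hZc hZspan hZdisj
  have hsol : SolProp A Z := fun y Cy hy => exist_sol A hadm Z hZspan y Cy hy
  have hSclosed : IsClosed (Sset A) := sset_isClosed A Z c hc1 hkey
  refine ⟨?_, hSclosed⟩
  -- the projection onto `Sset` along `Z` at time 0
  have hdisj : Disjoint (Smod A) Z := by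
    rw [Submodule.disjoint_def]
    exact hZdisj
  have hcodis : Codisjoint (Smod A) Z := by
    rw [codisjoint_iff, eq_top_iff]
    intro v _
    obtain ⟨s, hs, z, hz, hv⟩ := hZspan v
    rw [hv]
    exact Submodule.add_mem_sup hs hz
  have hiscompl : IsCompl (Smod A) Z := ⟨hdisj, hcodis⟩
  set P0 : X →L[ℝ] X :=
    (Smod A).subtypeL.comp ((Smod A).linearProjOfClosedCompl Z hiscompl hSclosed hZc) with hP0
  have hP0s : ∀ s, s ∈ Sset A → P0 s = s := by
    intro s hs
    show ((Smod A).linearProjOfClosedCompl Z hiscompl hSclosed hZc s : X) = s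
    show ((Smod A).projectionOnto Z hiscompl s : X) = s
    exact congrArg _ (Submodule.linearProjOfIsCompl_apply_left hiscompl ⟨s, hs⟩)
  have hP0z : ∀ z, z ∈ Z → P0 z = 0 := by
    intro z hz
    show ((Smod A).linearProjOfClosedCompl Z hiscompl hSclosed hZc z : X) = 0
    show ((Smod A).projectionOnto Z hiscompl z : X) = 0
    rw [Submodule.projectionOnto_apply_of_mem_right hiscompl hz]
    rfl
  have hP0mem : ∀ v, P0 v ∈ Sset A := by
    intro v
    exact ((Smod A).linearProjOfClosedCompl Z hiscompl hSclosed hZc v).2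
  have hP0dec : ∀ v : X, ∃ z ∈ Z, v = P0 v + z := by
    intro v
    obtain ⟨s, hs, z, hz, hv⟩ := hZspan v
    refine ⟨z, hz, ?_⟩
    have : P0 v = s := by
      rw [hv, map_add, hP0s s hs, hP0z z hz, add_zero]
    rw [this, ← hv]
  -- the decompositions at positive times
  choose sF zF hzF hsFbd hsFdec using
    (fun (n : ℕ) (v : X) => decompose A Z c hc1 hkey hsol (n+1) (by omega) v)
  -- unified family of (nonlinear, for now) projections
  set p : ℕ → X → X := fun n => Nat.rec (fun v => P0 v) (fun k _ v => sF k v) n with hp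
  have hp0 : ∀ v, p 0 v = P0 v := fun v => rfl
  have hpsucc : ∀ n v, p (n+1) v = sF n v := fun n v => rfl
  -- q1 : values in the stable space
  have q3 : ∀ n v m, n ≤ m →
      ‖PsiN A n m (p n v)‖ ≤ (max c ((2 * c^2 * max ‖A 0‖ 1) * ‖P0‖)) * ‖v‖ := by
    intro n v m hm
    cases n with
    | zero =>
      rw [hp0]
      calc ‖PsiN A 0 m (P0 v)‖ ≤ (2 * c^2 * max ‖A 0‖ 1) * ‖P0 v‖ :=
            unifS A Z c hc1 hkey _ (hP0mem v) m
      _ ≤ (2 * c^2 * max ‖A 0‖ 1) * (‖P0‖ * ‖v‖) := by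
          apply mul_le_mul_of_nonneg_left (P0.le_opNorm v)
          have h1 : (1:ℝ) ≤ max ‖A 0‖ 1 := le_max_right _ _
          nlinarith
      _ ≤ (max c ((2 * c^2 * max ‖A 0‖ 1) * ‖P0‖)) * ‖v‖ := by
          rw [← mul_assoc]
          exact mul_le_mul_of_nonneg_right (le_max_right _ _) (norm_nonneg v)
    | succ k =>
      rw [hpsucc]
      calc ‖PsiN A (k+1) m (sF k v)‖ ≤ c * ‖v‖ := hsFbd k v m hm
      _ ≤ _ := mul_le_mul_of_nonneg_right (le_max_left _ _) (norm_nonneg v)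
  have q1 : ∀ n v, p n v ∈ Sat A n := by
    intro n v
    exact ⟨(max c ((2 * c^2 * max ‖A 0‖ 1) * ‖P0‖)) * ‖v‖, fun m hm => q3 n v m hm⟩
  have q2 : ∀ n v, ∃ z ∈ Z, v = p n v + PsiN A 0 n z := by
    intro n v
    cases n with
    | zero =>
      obtain ⟨z, hz, hv⟩ := hP0dec v
      refine ⟨z, hz, ?_⟩
      rw [hp0, psiN_self_apply]
      exact hv
    | succ k =>
      exact ⟨zF k v, hzF k v, by rw [hpsucc]; exact hsFdec k v⟩
  have q4 : ∀ n v s, s ∈ Sat A n → (∃ z ∈ Z, v = s + PsiN A 0 n z) → p n v = s := by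
    intro n v s hs ⟨z, hz, hv⟩
    obtain ⟨z', hz', hv'⟩ := q2 n v
    have := decomp_uniq A Z c hc1 hkey hZdisj n (p n v) z' s z hz' hz (q1 n v) hs
      (by rw [← hv', ← hv])
    exact this.1
  -- linearity of the projections
  have hlin_add : ∀ n v w, p n (v + w) = p n v + p n w := by
    intro n v w
    obtain ⟨z1, hz1, h1⟩ := q2 n v
    obtain ⟨z2, hz2, h2⟩ := q2 n w
    refine q4 n (v + w) _ (sat_add A (q1 n v) (q1 n w)) ⟨z1 + z2, add_mem hz1 hz2, ?_⟩
    rw [map_add]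
    conv_lhs => rw [h1, h2]
    abel
  have hlin_smul : ∀ n (r : ℝ) v, p n (r • v) = r • p n v := by
    intro n r v
    obtain ⟨z1, hz1, h1⟩ := q2 n v
    refine q4 n (r • v) _ (sat_smul A r (q1 n v)) ⟨r • z1, Z.smul_mem r hz1, ?_⟩
    conv_lhs => rw [h1]
    rw [map_smul, smul_add]
  set c₂ : ℝ := max c ((2 * c^2 * max ‖A 0‖ 1) * ‖P0‖) with hc₂def
  have hc₂1 : 1 ≤ c₂ := le_trans hc1 (le_max_left _ _)
  set Pcl : ℕ → X →L[ℝ] X := fun n =>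
    LinearMap.mkContinuous
      { toFun := p n, map_add' := hlin_add n, map_smul' := hlin_smul n } c₂
      (fun v => by
        have h := q3 n v n le_rfl
        rwa [psiN_self_apply] at h) with hPcldef
  have hPcl_apply : ∀ n v, Pcl n v = p n v := fun n v => rfl
  -- derived algebraic facts
  have idem : ∀ n v, p n (p n v) = p n v := fun n v =>
    q4 n (p n v) (p n v) (q1 n v) ⟨0, Z.zero_mem, by rw [map_zero, add_zero]⟩
  have comm : ∀ (n : ℕ) v, p (n+1) (A n v) = A n (p n v) := by
    intro n v
    obtain ⟨z, hz, hv⟩ := q2 n v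
    refine q4 (n+1) _ _ ?_ ⟨z, hz, ?_⟩
    · obtain ⟨C, hC⟩ := q1 n v
      refine ⟨C, fun m hm => ?_⟩
      rw [psiN_shift A hm]
      exact hC m (by omega)
    · conv_lhs => rw [hv]
      rw [map_add]
      congr 1
      exact (psiN_succ_apply A (Nat.zero_le n) z).symm
  have kerchar : ∀ n v, p n v = 0 ↔ ∃ z ∈ Z, v = PsiN A 0 n z := by
    intro n v
    constructor
    · intro h
      obtain ⟨z, hz, hv⟩ := q2 n v
      exact ⟨z, hz, by rwa [h, zero_add] at hv⟩
    · rintro ⟨z, hz, hv⟩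
      exact q4 n v 0 (sat_zero_mem A n) ⟨z, hz, by rw [zero_add]; exact hv⟩
  -- constants
  have hA01 : (1:ℝ) ≤ max ‖A 0‖ 1 := le_max_right _ _
  have hcS1 : (1:ℝ) ≤ 2 * c^2 * max ‖A 0‖ 1 := by nlinarith
  have hcU1 : (1:ℝ) ≤ 2 * c^2 := by nlinarith
  have he2 : (2:ℝ) ≤ Real.exp 1 := by
    have := Real.add_one_le_exp (1:ℝ); linarith
  set NS : ℕ := ⌈(2 * c^2 * max ‖A 0‖ 1) * Real.exp 1⌉₊ with hNSdef
  set NU : ℕ := ⌈(2 * c^2) * Real.exp 1⌉₊ with hNUdef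
  have hNSpos : (0:ℝ) < (NS:ℝ) :=
    lt_of_lt_of_le (by nlinarith) (Nat.le_ceil ((2 * c^2 * max ‖A 0‖ 1) * Real.exp 1))
  have hNUpos : (0:ℝ) < (NU:ℝ) :=
    lt_of_lt_of_le (by nlinarith) (Nat.le_ceil ((2 * c^2) * Real.exp 1))
  set α : ℝ := min (1/(NS:ℝ)) (1/(NU:ℝ)) with hαdef
  have hαpos : 0 < α := lt_min (by positivity) (by positivity)
  set K : ℝ := max (((2 * c^2 * max ‖A 0‖ 1) * Real.exp 1) * c₂)
    (((2 * c^2) * Real.exp 1) * (1 + c₂)) with hKdef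
  have hKpos : 0 < K := by
    apply lt_of_lt_of_le _ (le_max_left _ _)
    have h1 : (0:ℝ) < 2*c^2*(max ‖A 0‖ 1) := by nlinarith
    have h2 : (0:ℝ) < Real.exp 1 := Real.exp_pos 1
    have h3 : (0:ℝ) < c₂ := by linarith
    exact mul_pos (mul_pos h1 h2) h3
  refine ⟨fun i => if 0 ≤ i then Pcl i.toNat else 0, K, α, hKpos, hαpos, ?_, ?_, ?_, ?_, ?_⟩
  · -- idempotency
    intro n hn
    have hn' : (0:ℤ) ≤ n := hn
    simp only [if_pos hn']
    ext v
    exact idem n.toNat v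
  · -- commutation
    intro n hn
    have hn' : (0:ℤ) ≤ n := hn
    have e1 : (0:ℤ) ≤ n + 1 := by omega
    have e2 : (n+1).toNat = n.toNat + 1 := by omega
    simp only [if_pos hn', if_pos e1, e2]
    ext v
    show A n (p n.toNat v) = p (n.toNat + 1) (A n v)
    have hcast : ((n.toNat : ℕ) : ℤ) = n := Int.toNat_of_nonneg hn'
    rw [← hcast]
    exact (comm n.toNat v).symm
  · -- bijectivity on kernels
    intro n hn
    have hn' : (0:ℤ) ≤ n := hn
    have e1 : (0:ℤ) ≤ n + 1 := by omega
    have e2 : (n+1).toNat = n.toNat + 1 := by omega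
    have hcast : ((n.toNat : ℕ) : ℤ) = n := Int.toNat_of_nonneg hn'
    simp only [if_pos hn', if_pos e1, e2]
    set k := n.toNat with hk
    refine ⟨?_, ?_, ?_⟩
    · -- MapsTo
      intro x hx
      have hx' : p k x = 0 := hx
      obtain ⟨z, hz, hxz⟩ := (kerchar k x).1 hx'
      show p (k+1) (A n x) = 0
      refine (kerchar (k+1) (A n x)).2 ⟨z, hz, ?_⟩
      rw [hxz, ← hcast]
      exact (psiN_succ_apply A (Nat.zero_le k) z).symm
    · -- InjOn
      intro x hx x' hx' heq
      obtain ⟨z, hz, hxz⟩ := (kerchar k x).1 hx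
      obtain ⟨z', hz', hxz'⟩ := (kerchar k x').1 hx'
      have h1 : PsiN A 0 (k+1) (z - z') = 0 := by
        rw [map_sub]
        have e3 : ∀ w, PsiN A 0 (k+1) w = A n (PsiN A 0 k w) := by
          intro w
          rw [psiN_succ_apply A (Nat.zero_le k), hcast]
        rw [e3 z, e3 z', ← hxz, ← hxz', heq, sub_self]
      have h2 : z - z' = 0 := psiN_injZ A Z c hc1 hkey _ (sub_mem hz hz') (k+1) h1
      rw [hxz, hxz', sub_eq_zero.1 h2]
    · -- SurjOn
      intro w hw
      have hw' : p (k+1) w = 0 := hw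
      obtain ⟨z, hz, hwz⟩ := (kerchar (k+1) w).1 hw'
      refine ⟨PsiN A 0 k z, ?_, ?_⟩
      · show p k (PsiN A 0 k z) = 0
        exact (kerchar k _).2 ⟨z, hz, rfl⟩
      · show A n (PsiN A 0 k z) = w
        rw [hwz, psiN_succ_apply A (Nat.zero_le k), hcast]
  · -- stable estimate (ii)
    intro m n hm hn hnm
    have hm' : (0:ℤ) ≤ m := hm
    have hn' : (0:ℤ) ≤ n := hn
    have hnm' : n.toNat ≤ m.toNat := by omega
    have hcastm : ((m.toNat : ℕ) : ℝ) = (m:ℝ) := by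
      rw [← Int.cast_natCast, Int.toNat_of_nonneg hm']
    have hcastn : ((n.toNat : ℕ) : ℝ) = (n:ℝ) := by
      rw [← Int.cast_natCast, Int.toNat_of_nonneg hn']
    have hD0 : (0:ℝ) ≤ (m:ℝ) - n := by
      have : (n:ℝ) ≤ (m:ℝ) := by exact_mod_cast hnm
      linarith
    simp only [if_pos hn']
    rw [phi_eq_psiN' A hn' hm']
    apply ContinuousLinearMap.opNorm_le_bound _ (by positivity)
    intro v
    rw [ContinuousLinearMap.comp_apply]
    have h1 := stable_decay A Z c hc1 hkey n.toNat (p n.toNat v) (q1 n.toNat v)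
      (le_refl n.toNat) hnm'
    rw [psiN_self_apply] at h1
    have h2 : ‖p n.toNat v‖ ≤ c₂ * ‖v‖ := by
      have h := q3 n.toNat v n.toNat le_rfl
      rwa [psiN_self_apply] at h
    have h3 : Real.exp (-((((m.toNat:ℕ):ℝ) - ((n.toNat:ℕ):ℝ)) /
          ((⌈(2 * c^2 * max ‖A 0‖ 1) * Real.exp 1⌉₊ : ℕ) : ℝ)))
        ≤ Real.exp (-α * ((m:ℝ) - (n:ℝ))) := by
      apply Real.exp_le_exp.2
      rw [hcastm, hcastn]
      have hα1 : α ≤ 1/((NS:ℕ):ℝ) := min_le_left _ _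
      have h5 : α * ((m:ℝ) - n) ≤ (1/((NS:ℕ):ℝ)) * ((m:ℝ)-n) :=
        mul_le_mul_of_nonneg_right hα1 hD0
      have h6 : (1/((NS:ℕ):ℝ))*((m:ℝ)-n) = ((m:ℝ)-n)/((NS:ℕ):ℝ) := by ring
      show -(((m:ℝ) - n) / ((NS:ℕ):ℝ)) ≤ -α * ((m:ℝ) - (n:ℝ))
      linarith
    have hPclv : (Pcl n.toNat) v = p n.toNat v := rfl
    rw [hPclv]
    have hexp0 : (0:ℝ) ≤ Real.exp (-α * ((m:ℝ) - (n:ℝ))) := le_of_lt (Real.exp_pos _)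
    have hcS0 : (0:ℝ) ≤ (2 * c^2 * max ‖A 0‖ 1) * Real.exp 1 := by positivity
    calc ‖PsiN A n.toNat m.toNat (p n.toNat v)‖
        ≤ ((2 * c^2 * max ‖A 0‖ 1) * Real.exp 1) *
          Real.exp (-((((m.toNat:ℕ):ℝ) - ((n.toNat:ℕ):ℝ)) /
            ((⌈(2 * c^2 * max ‖A 0‖ 1) * Real.exp 1⌉₊ : ℕ) : ℝ))) * ‖p n.toNat v‖ := h1
      _ ≤ ((2 * c^2 * max ‖A 0‖ 1) * Real.exp 1) *
          Real.exp (-α * ((m:ℝ) - (n:ℝ))) * (c₂ * ‖v‖) := by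
          apply mul_le_mul (mul_le_mul_of_nonneg_left h3 hcS0) h2 (norm_nonneg _)
          positivity
      _ = (((2 * c^2 * max ‖A 0‖ 1) * Real.exp 1) * c₂) *
          (Real.exp (-α * ((m:ℝ) - (n:ℝ))) * ‖v‖) := by ring
      _ ≤ K * (Real.exp (-α * ((m:ℝ) - (n:ℝ))) * ‖v‖) := by
          apply mul_le_mul_of_nonneg_right _ (by positivity)
          rw [hKdef]
          exact le_max_left _ _
      _ = K * Real.exp (-α * ((m:ℝ) - (n:ℝ))) * ‖v‖ := by ring
  · -- unstable estimate (iii)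
    intro m n hm hn hmn x yv hPx hPhi
    have hm' : (0:ℤ) ≤ m := hm
    have hn' : (0:ℤ) ≤ n := hn
    have hmn' : m.toNat ≤ n.toNat := by omega
    have hcastm : ((m.toNat : ℕ) : ℝ) = (m:ℝ) := by
      rw [← Int.cast_natCast, Int.toNat_of_nonneg hm']
    have hcastn : ((n.toNat : ℕ) : ℝ) = (n:ℝ) := by
      rw [← Int.cast_natCast, Int.toNat_of_nonneg hn']
    have hD0 : (0:ℝ) ≤ (n:ℝ) - m := by
      have : (m:ℝ) ≤ (n:ℝ) := by exact_mod_cast hmn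
      linarith
    simp only [if_pos hm', if_pos hn'] at hPx hPhi
    have hPx' : p m.toNat x = 0 := hPx
    obtain ⟨z, hz, hxz⟩ := (kerchar m.toNat x).1 hPx'
    rw [phi_eq_psiN' A hm' hn'] at hPhi
    have hPsix : PsiN A m.toNat n.toNat x = PsiN A 0 n.toNat z := by
      rw [hxz, psiN_comp_apply A (Nat.zero_le m.toNat) hmn']
    have hyv : PsiN A 0 n.toNat z = yv - p n.toNat yv := by
      rw [← hPsix, hPhi]
      rfl
    have h1 := unstable_decay A Z c hc1 hkey z hz hmn'
    have h2 : ‖yv - p n.toNat yv‖ ≤ (1 + c₂) * ‖yv‖ := by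
      have h := q3 n.toNat yv n.toNat le_rfl
      rw [psiN_self_apply] at h
      calc ‖yv - p n.toNat yv‖ ≤ ‖yv‖ + ‖p n.toNat yv‖ := norm_sub_le _ _
      _ ≤ ‖yv‖ + c₂ * ‖yv‖ := by linarith
      _ = (1 + c₂) * ‖yv‖ := by ring
    have h3 : Real.exp (-((((n.toNat:ℕ):ℝ) - ((m.toNat:ℕ):ℝ)) /
          ((⌈(2 * c^2) * Real.exp 1⌉₊ : ℕ) : ℝ)))
        ≤ Real.exp (-α * ((n:ℝ) - (m:ℝ))) := by
      apply Real.exp_le_exp.2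
      rw [hcastm, hcastn]
      have hα1 : α ≤ 1/((NU:ℕ):ℝ) := min_le_right _ _
      have h5 : α * ((n:ℝ) - m) ≤ (1/((NU:ℕ):ℝ)) * ((n:ℝ)-m) :=
        mul_le_mul_of_nonneg_right hα1 hD0
      have h6 : (1/((NU:ℕ):ℝ))*((n:ℝ)-m) = ((n:ℝ)-m)/((NU:ℕ):ℝ) := by ring
      show -(((n:ℝ) - m) / ((NU:ℕ):ℝ)) ≤ -α * ((n:ℝ) - (m:ℝ))
      linarith
    have hexp0 : (0:ℝ) ≤ Real.exp (-α * ((n:ℝ) - (m:ℝ))) := le_of_lt (Real.exp_pos _)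
    have hcU0 : (0:ℝ) ≤ (2 * c^2) * Real.exp 1 := by positivity
    calc ‖x‖ = ‖PsiN A 0 m.toNat z‖ := by rw [hxz]
      _ ≤ ((2 * c^2) * Real.exp 1) *
          Real.exp (-((((n.toNat:ℕ):ℝ) - ((m.toNat:ℕ):ℝ)) /
            ((⌈(2 * c^2) * Real.exp 1⌉₊ : ℕ) : ℝ))) * ‖PsiN A 0 n.toNat z‖ := h1
      _ = ((2 * c^2) * Real.exp 1) *
          Real.exp (-((((n.toNat:ℕ):ℝ) - ((m.toNat:ℕ):ℝ)) /
            ((⌈(2 * c^2) * Real.exp 1⌉₊ : ℕ) : ℝ))) * ‖yv - p n.toNat yv‖ := by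
          rw [hyv]
      _ ≤ ((2 * c^2) * Real.exp 1) *
          Real.exp (-α * ((n:ℝ) - (m:ℝ))) * ((1 + c₂) * ‖yv‖) := by
          apply mul_le_mul (mul_le_mul_of_nonneg_left h3 hcU0) h2 (norm_nonneg _)
          positivity
      _ = (((2 * c^2) * Real.exp 1) * (1 + c₂)) *
          (Real.exp (-α * ((n:ℝ) - (m:ℝ))) * ‖yv‖) := by ring
      _ ≤ K * (Real.exp (-α * ((n:ℝ) - (m:ℝ))) * ‖yv‖) := by
          apply mul_le_mul_of_nonneg_right _ (by positivity)
          rw [hKdef]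
          exact le_max_right _ _
      _ = K * Real.exp (-α * ((n:ℝ) - (m:ℝ))) * ‖yv‖ := by ring

end
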